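/- Assign to each edge of the grid graph on ℤ² an independent random weight that equals 0 or 2, each with probability 1/2. Then there is a constant C > 0 such that for every integer m ≥ 1: E[monodist_w((0,0),(m,m))] ≤ m + C·√m. -/

import Mathlib

open MeasureTheory ProbabilityTheory

/-- Vertices of the grid graph: integer points of the plane. -/
abbrev V : Type := ℤ × ℤ

/-- Adjacency in the grid graph: `u` and `v` are joined iff `‖u - v‖₁ = 1`. -/
def gridAdj (u v : V) : Prop := |u.1 - v.1| + |u.2 - v.2| = 1

/-- The weight of a walk (list of vertices): the sum of `w` over consecutive pairs. -/
noncomputable def walkWeight (w : V → V → ℝ) (p : List V) : ℝ :=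
  (List.zipWith w p p.tail).sum

/-- `p` is a monotone walk from `u` to `v`: a walk in the grid graph using exactly
`‖u - v‖₁` edges. -/
def IsMonoWalk (u v : V) (p : List V) : Prop :=
  p.Chain' gridAdj ∧ p.head? = some u ∧ p.getLast? = some v ∧
    p.length = (|u.1 - v.1| + |u.2 - v.2|).toNat + 1

/-- The monotone-path distance: the infimum of weights of monotone walks. -/
noncomputable def monoDist (w : V → V → ℝ) (u v : V) : ℝ :=
  sInf { c | ∃ p : List V, IsMonoWalk u v p ∧ c = walkWeight w p }

/-- A canonical orientation of the edges of the grid graph: the pair `(v, b)` denotes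
the edge from `v` to its East neighbour (if `b = true`) or North neighbour
(if `b = false`); every undirected edge occurs exactly once. -/
def edgeOf : V × Bool → V × V :=
  fun e => (e.1, if e.2 then (e.1.1 + 1, e.1.2) else (e.1.1, e.1.2 + 1))

namespace S10

/-- East neighbour. -/
def east (p : V) : V := (p.1 + 1, p.2)
/-- North neighbour. -/
def north (p : V) : V := (p.1, p.2 + 1)

/-- The greedy direction at `p` (true = East). -/
def gdir (m : ℕ) (w : V × Bool → Bool) (p : V) : Bool :=
  if p.1 = (m : ℤ) then false
  else if p.2 = (m : ℤ) then true
  else if w (p, true) = w (p, false) then decide (p.1 ≤ p.2)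
  else ! w (p, true)

/-- The greedy walk. -/
def gpos (m : ℕ) (w : V × Bool → Bool) : ℕ → V
  | 0 => ((0 : ℤ), (0 : ℤ))
  | t + 1 => if gdir m w (gpos m w t) then east (gpos m w t) else north (gpos m w t)

lemma gpos_level (m : ℕ) (w : V × Bool → Bool) (t : ℕ) :
    (gpos m w t).1 + (gpos m w t).2 = (t : ℤ) := by
  induction t with
  | zero => simp [gpos]
  | succ t ih =>
    rw [gpos]
    split <;> simp [east, north] <;> push_cast <;> omega

lemma gpos_inbox (m : ℕ) (hm : 1 ≤ m) (w : V × Bool → Bool) (t : ℕ) (ht : t ≤ 2 * m) :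
    0 ≤ (gpos m w t).1 ∧ (gpos m w t).1 ≤ (m : ℤ) ∧
      0 ≤ (gpos m w t).2 ∧ (gpos m w t).2 ≤ (m : ℤ) := by
  induction t with
  | zero => simp [gpos]
  | succ t ih =>
    have ht' : t ≤ 2 * m := by omega
    have hlev := gpos_level m w t
    obtain ⟨c1, c2, c3, c4⟩ := ih ht'
    have hx : gdir m w (gpos m w t) = true → (gpos m w t).1 < (m : ℤ) := by
      intro hg; unfold gdir at hg
      split_ifs at hg with h1 h2 h3 <;> omega
    have hy : gdir m w (gpos m w t) = false → (gpos m w t).2 < (m : ℤ) := by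
      intro hg; unfold gdir at hg
      split_ifs at hg with h1 h2 h3
      · omega
      · exact lt_of_le_of_ne c4 h2
      · exact lt_of_le_of_ne c4 h2
    rw [gpos]
    cases hgd : gdir m w (gpos m w t) with
    | true => have := hx hgd; simp [east]; omega
    | false => have := hy hgd; simp [north]; omega

lemma gpos_final (m : ℕ) (hm : 1 ≤ m) (w : V × Bool → Bool) :
    gpos m w (2 * m) = ((m : ℤ), (m : ℤ)) := by
  have h1 := gpos_level m w (2 * m)
  have h2 := gpos_inbox m hm w (2 * m) le_rfl
  have : ((2 * m : ℕ) : ℤ) = 2 * (m : ℤ) := by push_cast; ring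
  rw [this] at h1
  ext <;> omega

lemma gpos_adj (m : ℕ) (w : V × Bool → Bool) (t : ℕ) :
    gridAdj (gpos m w t) (gpos m w (t + 1)) := by
  rw [gpos]
  split <;> simp [gridAdj, east, north]

/-- The greedy walk up to time `t` only depends on the weights of edges whose tail
has level `< t`. -/
lemma gpos_congr (m : ℕ) (w w' : V × Bool → Bool) (t : ℕ)
    (h : ∀ e : V × Bool, e.1.1 + e.1.2 < (t : ℤ) → w e = w' e) :
    gpos m w t = gpos m w' t := by
  induction t with
  | zero => rfl
  | succ t ih =>
    have h' : ∀ e : V × Bool, e.1.1 + e.1.2 < (t : ℤ) → w e = w' e := by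
      intro e he; exact h e (by push_cast; omega)
    have hp : gpos m w t = gpos m w' t := ih h'
    have hlev := gpos_level m w t
    have hd : gdir m w (gpos m w t) = gdir m w' (gpos m w t) := by
      unfold gdir
      have h1 : w (gpos m w t, true) = w' (gpos m w t, true) := by
        apply h; dsimp only; rw [hlev]; push_cast; omega
      have h2 : w (gpos m w t, false) = w' (gpos m w t, false) := by
        apply h; dsimp only; rw [hlev]; push_cast; omega
      rw [h1, h2]
    rw [gpos, gpos, ← hp, hd]

/-- All oriented edges with tail in the `[0,m] × [0,m]` box. -/
noncomputable def Ebox (m : ℕ) : Finset (V × Bool) :=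
  ((Finset.Icc (0 : ℤ) (m : ℤ)) ×ˢ (Finset.Icc (0 : ℤ) (m : ℤ))) ×ˢ (Finset.univ : Finset Bool)

lemma mem_Ebox (m : ℕ) (e : V × Bool) :
    e ∈ Ebox m ↔ 0 ≤ e.1.1 ∧ e.1.1 ≤ (m : ℤ) ∧ 0 ≤ e.1.2 ∧ e.1.2 ≤ (m : ℤ) := by
  simp [Ebox, Finset.mem_product, and_assoc]

/-- Boolean weight configurations on the box. -/
abbrev Cfg (m : ℕ) : Type := {e // e ∈ Ebox m} → Bool

/-- Extension of a configuration to all edges (false outside the box). -/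
noncomputable def extc (m : ℕ) (σ : Cfg m) : V × Bool → Bool :=
  fun e => if h : e ∈ Ebox m then σ ⟨e, h⟩ else false

lemma extc_update (m : ℕ) (σ : Cfg m) (e : {e // e ∈ Ebox m}) (b : Bool) (e' : V × Bool)
    (h : e' ≠ e.1) : extc m (Function.update σ e b) e' = extc m σ e' := by
  unfold extc
  split_ifs with h'
  · rw [Function.update_of_ne]
    intro hc
    exact h (by rw [← hc])
  · rfl

lemma gpos_extc_update (m : ℕ) (σ : Cfg m) (e : {e // e ∈ Ebox m}) (b : Bool) (t : ℕ)
    (hlev : (t : ℤ) ≤ e.1.1.1 + e.1.1.2) :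
    gpos m (extc m (Function.update σ e b)) t = gpos m (extc m σ) t := by
  apply gpos_congr
  intro e' he'
  apply extc_update
  intro hc
  rw [hc] at he'
  omega

/-- The summing primitive: doubling a sum by resampling one coordinate. -/
lemma sum_update (m : ℕ) (e : {e // e ∈ Ebox m}) (H : Cfg m → ℝ) :
    2 * ∑ σ : Cfg m, H σ
      = ∑ σ : Cfg m, (H (Function.update σ e true) + H (Function.update σ e false)) := by
  classical
  have key : ∀ b : Bool, ∀ ρ : {j // j ≠ e} → Bool,
      ∀ b' : Bool, Function.update ((Equiv.piSplitAt e (fun _ => Bool)).symm (b, ρ)) e b'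
        = (Equiv.piSplitAt e (fun _ => Bool)).symm (b', ρ) := by
    intro b ρ b'
    funext j
    by_cases hj : j = e
    · subst hj
      simp [Equiv.piSplitAt_symm_apply]
    · simp [Function.update_of_ne hj, Equiv.piSplitAt_symm_apply, hj]
  have e1 : ∀ G : Cfg m → ℝ, ∑ σ : Cfg m, G σ
      = ∑ x : Bool × ({j // j ≠ e} → Bool), G ((Equiv.piSplitAt e (fun _ => Bool)).symm x) :=
    fun G => (Equiv.sum_comp (Equiv.piSplitAt e (fun _ => Bool)).symm G).symm
  rw [e1 H, e1 (fun σ => H (Function.update σ e true) + H (Function.update σ e false))]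
  rw [Fintype.sum_prod_type, Fintype.sum_prod_type]
  simp only [key]
  simp [Fintype.sum_bool]
  rw [Finset.sum_add_distrib]

lemma fresh1 (m : ℕ) (e : {e // e ∈ Ebox m}) (F : Cfg m → ℝ)
    (hF : ∀ σ b, F (Function.update σ e b) = F σ) (g : Bool → ℝ) :
    ∑ σ : Cfg m, F σ * g (σ e)
      = (∑ σ : Cfg m, F σ) * ((g true + g false) / 2) := by
  have h := sum_update m e (fun σ => F σ * g (σ e))
  simp only [hF, Function.update_self] at h
  have : ∑ σ : Cfg m, (F σ * g true + F σ * g false)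
      = (∑ σ : Cfg m, F σ) * (g true + g false) := by
    rw [Finset.sum_add_distrib, ← Finset.sum_mul, ← Finset.sum_mul]; ring
  rw [this] at h
  linarith

lemma fresh2 (m : ℕ) (e1 e2 : {e // e ∈ Ebox m}) (hne : e1 ≠ e2) (F : Cfg m → ℝ)
    (hF1 : ∀ σ b, F (Function.update σ e1 b) = F σ)
    (hF2 : ∀ σ b, F (Function.update σ e2 b) = F σ) (g : Bool → Bool → ℝ) :
    ∑ σ : Cfg m, F σ * g (σ e1) (σ e2)
      = (∑ σ : Cfg m, F σ)
        * ((g true true + g true false + g false true + g false false) / 4) := by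
  have h := sum_update m e2 (fun σ => F σ * g (σ e1) (σ e2))
  simp only [hF2, Function.update_self,
    Function.update_of_ne (fun hc => hne (by rw [hc]) : e1 ≠ e2)] at h
  have h2 : ∑ σ : Cfg m, (F σ * g (σ e1) true + F σ * g (σ e1) false)
      = ∑ σ : Cfg m, F σ * (fun b => g b true + g b false) (σ e1) := by
    apply Finset.sum_congr rfl; intro σ _; simp; ring
  rw [h2, fresh1 m e1 F hF1 (fun b => g b true + g b false)] at h
  linarith
/-- Points of the box at level `t`. -/
noncomputable def levelT (m t : ℕ) : Finset V :=
  (((Finset.Icc (0 : ℤ) (m : ℤ)) ×ˢ (Finset.Icc (0 : ℤ) (m : ℤ)))).filter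
    (fun p => p.1 + p.2 = (t : ℤ))

lemma mem_levelT (m t : ℕ) (p : V) :
    p ∈ levelT m t ↔ 0 ≤ p.1 ∧ p.1 ≤ (m : ℤ) ∧ 0 ≤ p.2 ∧ p.2 ≤ (m : ℤ)
      ∧ p.1 + p.2 = (t : ℤ) := by
  simp [levelT, Finset.mem_filter, Finset.mem_product, and_assoc]

lemma gpos_mem_levelT (m : ℕ) (hm : 1 ≤ m) (t : ℕ) (ht : t ≤ 2 * m) (σ : Cfg m) :
    gpos m (extc m σ) t ∈ levelT m t := by
  rw [mem_levelT]
  obtain ⟨c1, c2, c3, c4⟩ := gpos_inbox m hm (extc m σ) t ht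
  exact ⟨c1, c2, c3, c4, gpos_level m (extc m σ) t⟩

/-- The indicator of the event that the walk is at `p` at time `t`. -/
noncomputable def indP (m t : ℕ) (p : V) (σ : Cfg m) : ℝ :=
  if gpos m (extc m σ) t = p then 1 else 0

lemma indP_nonneg (m t : ℕ) (p : V) (σ : Cfg m) : 0 ≤ indP m t p σ := by
  unfold indP; split <;> norm_num

lemma indP_update (m t : ℕ) (p : V) (e : {e // e ∈ Ebox m})
    (hlev : (t : ℤ) ≤ e.1.1.1 + e.1.1.2) (σ : Cfg m) (b : Bool) :
    indP m t p (Function.update σ e b) = indP m t p σ := by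
  unfold indP
  rw [gpos_extc_update m σ e b t hlev]

/-- Fibering a sum over configurations according to the time-`t` position. -/
lemma fiber (m : ℕ) (hm : 1 ≤ m) (t : ℕ) (ht : t ≤ 2 * m) (f : Cfg m → ℝ) :
    ∑ σ : Cfg m, f σ = ∑ p ∈ levelT m t, ∑ σ : Cfg m, indP m t p σ * f σ := by
  rw [Finset.sum_comm]
  apply Finset.sum_congr rfl
  intro σ _
  unfold indP
  simp only [ite_mul, one_mul, zero_mul]
  rw [Finset.sum_ite_eq (levelT m t) (gpos m (extc m σ) t) (fun _ => f σ)]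
  rw [if_pos (gpos_mem_levelT m hm t ht σ)]

/-- The diagonal displacement at time `t`. -/
noncomputable def dd (m t : ℕ) (σ : Cfg m) : ℤ :=
  |(gpos m (extc m σ) t).1 - (gpos m (extc m σ) t).2|

/-- `Sdd m t d` is (`2^N` times) the probability that `|D_t| ≥ d`. -/
noncomputable def Sdd (m t : ℕ) (d : ℤ) : ℝ :=
  ∑ σ : Cfg m, if d ≤ dd m t σ then (1 : ℝ) else 0

lemma Sdd_nonneg (m t : ℕ) (d : ℤ) : 0 ≤ Sdd m t d := by
  apply Finset.sum_nonneg; intro σ _; split <;> norm_num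

/-- The cost incurred by the greedy walk at step `t`. -/
noncomputable def cterm (m t : ℕ) (σ : Cfg m) : ℝ :=
  if extc m σ (gpos m (extc m σ) t, gdir m (extc m σ) (gpos m (extc m σ) t)) then 2 else 0

/-- The total cost of the greedy walk. -/
noncomputable def costc (m : ℕ) (σ : Cfg m) : ℝ := ∑ t ∈ Finset.range (2 * m), cterm m t σ

/-- cost of a free step as a function of the two fresh edges -/
def gBoth : Bool → Bool → ℝ := fun b c => if b && c then 2 else 0
/-- cost of a forced step as a function of the fresh edge -/
def gOne : Bool → ℝ := fun b => if b then 2 else 0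
/-- away-move indicator when `x < y` -/
def gTF : Bool → Bool → ℝ := fun b c => if b && !c then 1 else 0
/-- away-move indicator when `x > y` -/
def gFT : Bool → Bool → ℝ := fun b c => if !b && c then 1 else 0

lemma edge_mem_Ebox (m t : ℕ) (p : V) (hp : p ∈ levelT m t) (b : Bool) :
    (p, b) ∈ Ebox m := by
  rw [mem_levelT] at hp
  rw [mem_Ebox]
  exact ⟨hp.1, hp.2.1, hp.2.2.1, hp.2.2.2.1⟩

lemma extc_pair (m : ℕ) (σ : Cfg m) (e : V × Bool) (h : e ∈ Ebox m) :
    extc m σ e = σ ⟨e, h⟩ := dif_pos h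

/-- Step-cost bound: expected cost of each step is at most `1/2` plus half the
probability of being forced. -/
lemma cterm_bound (m : ℕ) (hm : 1 ≤ m) (t : ℕ) (ht : t < 2 * m) :
    ∑ σ : Cfg m, cterm m t σ
      ≤ (∑ σ : Cfg m, (1 : ℝ)) * (1 / 2) + (1 / 2) * Sdd m t (2 * (m : ℤ) - (t : ℤ)) := by
  have ht' : t ≤ 2 * m := le_of_lt ht
  rw [fiber m hm t ht' (cterm m t)]
  rw [show (∑ σ : Cfg m, (1:ℝ)) = ∑ p ∈ levelT m t, ∑ σ : Cfg m, indP m t p σ * 1 from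
    fiber m hm t ht' 1]
  rw [show Sdd m t (2 * (m : ℤ) - (t : ℤ)) = ∑ p ∈ levelT m t, ∑ σ : Cfg m,
      indP m t p σ * (if 2 * (m : ℤ) - (t : ℤ) ≤ dd m t σ then (1:ℝ) else 0) from
    fiber m hm t ht' _]
  rw [Finset.sum_mul, Finset.mul_sum, ← Finset.sum_add_distrib]
  apply Finset.sum_le_sum
  intro p hp
  have hpl := (mem_levelT m t p).1 hp
  have he1 : (p, true) ∈ Ebox m := edge_mem_Ebox m t p hp true
  have he2 : (p, false) ∈ Ebox m := edge_mem_Ebox m t p hp false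
  set e1 : {e // e ∈ Ebox m} := ⟨(p, true), he1⟩
  set e2 : {e // e ∈ Ebox m} := ⟨(p, false), he2⟩
  have hlev1 : (t : ℤ) ≤ e1.1.1.1 + e1.1.1.2 := le_of_eq hpl.2.2.2.2.symm
  have hlev2 : (t : ℤ) ≤ e2.1.1.1 + e2.1.1.2 := le_of_eq hpl.2.2.2.2.symm
  have hIone : ∀ σ : Cfg m, indP m t p σ * 1 = indP m t p σ := fun σ => mul_one _
  by_cases hfree : p.1 ≠ (m : ℤ) ∧ p.2 ≠ (m : ℤ)
  · -- free step
    have hpt : ∀ σ : Cfg m, indP m t p σ * cterm m t σ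
        = indP m t p σ * gBoth (σ e1) (σ e2) := by
      intro σ
      unfold indP
      by_cases hpos : gpos m (extc m σ) t = p
      · rw [if_pos hpos]
        unfold cterm gBoth
        rw [hpos]
        unfold gdir
        rw [if_neg hfree.1, if_neg hfree.2]
        rw [extc_pair m σ (p, true) he1, extc_pair m σ (p, false) he2]
        rcases Bool.dichotomy (σ e1) with hb1 | hb1 <;>
          rcases Bool.dichotomy (σ e2) with hb2 | hb2 <;>
          rcases Bool.dichotomy (decide (p.1 ≤ p.2)) with hd | hd <;>
          simp [extc_pair m σ (p, true) he1, extc_pair m σ (p, false) he2,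
            show σ ⟨(p, true), he1⟩ = σ e1 from rfl, show σ ⟨(p, false), he2⟩ = σ e2 from rfl,
            hb1, hb2, hd]
      · rw [if_neg hpos]; ring
    rw [Finset.sum_congr rfl (fun σ _ => hpt σ)]
    rw [fresh2 m e1 e2 (by simp [e1, e2, Subtype.ext_iff]) (indP m t p)
      (fun σ b => indP_update m t p e1 hlev1 σ b)
      (fun σ b => indP_update m t p e2 hlev2 σ b) gBoth]
    have hsum2 : 0 ≤ ∑ σ : Cfg m,
        indP m t p σ * (if 2 * (m:ℤ) - (t:ℤ) ≤ dd m t σ then (1:ℝ) else 0) := by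
      apply Finset.sum_nonneg; intro σ _
      apply mul_nonneg (indP_nonneg m t p σ)
      split <;> norm_num
    rw [Finset.sum_congr rfl (fun σ _ => hIone σ)]
    have hco : (gBoth true true + gBoth true false + gBoth false true + gBoth false false) / 4
        = (1 : ℝ) / 2 := by norm_num [gBoth]
    rw [hco]
    linarith
  · -- forced step
    push_neg at hfree
    have hforced : p.1 = (m : ℤ) ∨ p.2 = (m : ℤ) := by
      by_cases h1 : p.1 = (m : ℤ)
      · exact Or.inl h1
      · exact Or.inr (hfree h1)
    set b0 : Bool := if p.1 = (m : ℤ) then false else true with hb0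
    have he0 : (p, b0) ∈ Ebox m := edge_mem_Ebox m t p hp b0
    set e0 : {e // e ∈ Ebox m} := ⟨(p, b0), he0⟩
    have hlev0 : (t : ℤ) ≤ e0.1.1.1 + e0.1.1.2 := le_of_eq hpl.2.2.2.2.symm
    have hdir : ∀ σ : Cfg m, gdir m (extc m σ) p = b0 := by
      intro σ
      unfold gdir
      by_cases h1 : p.1 = (m : ℤ)
      · rw [if_pos h1, hb0, if_pos h1]
      · have h2 : p.2 = (m : ℤ) := hfree h1
        rw [if_neg h1, if_pos h2, hb0, if_neg h1]
    have hpt : ∀ σ : Cfg m, indP m t p σ * cterm m t σ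
        = indP m t p σ * gOne (σ e0) := by
      intro σ
      unfold indP
      by_cases hpos : gpos m (extc m σ) t = p
      · rw [if_pos hpos]
        unfold cterm gOne
        rw [hpos, hdir σ, extc_pair m σ (p, b0) he0]
      · rw [if_neg hpos]; ring
    rw [Finset.sum_congr rfl (fun σ _ => hpt σ)]
    rw [fresh1 m e0 (indP m t p) (fun σ b => indP_update m t p e0 hlev0 σ b) gOne]
    have hdd : ∀ σ : Cfg m, indP m t p σ * (if 2 * (m:ℤ) - (t:ℤ) ≤ dd m t σ then (1:ℝ) else 0)
        = indP m t p σ := by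
      intro σ
      unfold indP
      by_cases hpos : gpos m (extc m σ) t = p
      · rw [if_pos hpos]
        have : 2 * (m:ℤ) - (t:ℤ) ≤ dd m t σ := by
          unfold dd
          rw [hpos]
          have h5 := hpl.2.2.2.2
          have h6 := hpl.2.1
          have h7 := hpl.2.2.2.1
          rcases abs_cases (p.1 - p.2) with ⟨hh, _⟩ | ⟨hh, _⟩ <;>
            rcases hforced with h | h <;> omega
        rw [if_pos this, mul_one]
      · rw [if_neg hpos]; ring
    rw [Finset.sum_congr rfl (fun σ _ => hdd σ), Finset.sum_congr rfl (fun σ _ => hIone σ)]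
    have hco : (gOne true + gOne false) / 2 = (1 : ℝ) := by norm_num [gOne]
    rw [hco, mul_one]
    linarith
lemma gpos_succ_eq (m : ℕ) (w : V × Bool → Bool) (t : ℕ) :
    gpos m w (t + 1)
      = if gdir m w (gpos m w t) then east (gpos m w t) else north (gpos m w t) := by
  rw [gpos]

lemma gdir_forced (m : ℕ) (w : V × Bool → Bool) (p : V)
    (h : p.1 = (m : ℤ) ∨ p.2 = (m : ℤ)) :
    gdir m w p = if p.1 = (m : ℤ) then false else true := by
  unfold gdir
  by_cases h1 : p.1 = (m : ℤ)
  · rw [if_pos h1, if_pos h1]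
  · rw [if_neg h1, if_neg h1, if_pos (h.resolve_left h1)]

lemma gdir_free_eq (m : ℕ) (σ : Cfg m) (p : V) (he1 : (p, true) ∈ Ebox m)
    (he2 : (p, false) ∈ Ebox m) (h1 : p.1 ≠ (m : ℤ)) (h2 : p.2 ≠ (m : ℤ)) :
    gdir m (extc m σ) p
      = if σ ⟨(p, true), he1⟩ = σ ⟨(p, false), he2⟩ then decide (p.1 ≤ p.2)
        else !σ ⟨(p, true), he1⟩ := by
  unfold gdir
  rw [if_neg h1, if_neg h2, extc_pair m σ (p, true) he1, extc_pair m σ (p, false) he2]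

/-- The master inequality: one-step evolution of the tail probability of `|D_t|`. -/
lemma master (m : ℕ) (hm : 1 ≤ m) (t : ℕ) (ht : t < 2 * m) (k : ℕ) :
    Sdd m (t + 1) ((k : ℤ) + 2)
      ≤ 3 / 4 * Sdd m t ((k : ℤ) + 3) + 1 / 4 * Sdd m t ((k : ℤ) + 1) := by
  have ht' : t ≤ 2 * m := le_of_lt ht
  unfold Sdd
  rw [fiber m hm t ht' (fun σ => if (k : ℤ) + 2 ≤ dd m (t + 1) σ then (1 : ℝ) else 0)]
  rw [fiber m hm t ht' (fun σ => if (k : ℤ) + 3 ≤ dd m t σ then (1 : ℝ) else 0)]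
  rw [fiber m hm t ht' (fun σ => if (k : ℤ) + 1 ≤ dd m t σ then (1 : ℝ) else 0)]
  rw [Finset.mul_sum, Finset.mul_sum, ← Finset.sum_add_distrib]
  apply Finset.sum_le_sum
  intro p hp
  have hpl := (mem_levelT m t p).1 hp
  have he1 : (p, true) ∈ Ebox m := edge_mem_Ebox m t p hp true
  have he2 : (p, false) ∈ Ebox m := edge_mem_Ebox m t p hp false
  set e1 : {e // e ∈ Ebox m} := ⟨(p, true), he1⟩ with he1d
  set e2 : {e // e ∈ Ebox m} := ⟨(p, false), he2⟩ with he2d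
  have hlev1 : (t : ℤ) ≤ e1.1.1.1 + e1.1.1.2 := le_of_eq hpl.2.2.2.2.symm
  have hlev2 : (t : ℤ) ≤ e2.1.1.1 + e2.1.1.2 := le_of_eq hpl.2.2.2.2.symm
  have hconst : ∀ (c : ℤ) (σ : Cfg m), indP m t p σ * (if c ≤ dd m t σ then (1 : ℝ) else 0)
      = indP m t p σ * (if c ≤ |p.1 - p.2| then (1 : ℝ) else 0) := by
    intro c σ
    unfold indP
    by_cases hpos : gpos m (extc m σ) t = p
    · rw [if_pos hpos]; unfold dd; rw [hpos]
    · rw [if_neg hpos]; ring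
  rw [Finset.sum_congr rfl (fun σ _ => hconst ((k : ℤ) + 3) σ),
      Finset.sum_congr rfl (fun σ _ => hconst ((k : ℤ) + 1) σ),
      ← Finset.sum_mul, ← Finset.sum_mul]
  have hSnonneg : (0 : ℝ) ≤ ∑ σ : Cfg m, indP m t p σ :=
    Finset.sum_nonneg fun σ _ => indP_nonneg m t p σ
  have hLHS_le : ∑ σ : Cfg m, indP m t p σ * (if (k : ℤ) + 2 ≤ dd m (t+1) σ then (1 : ℝ) else 0)
      ≤ ∑ σ : Cfg m, indP m t p σ := by
    apply Finset.sum_le_sum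
    intro σ _
    by_cases h : (k : ℤ) + 2 ≤ dd m (t + 1) σ
    · rw [if_pos h, mul_one]
    · rw [if_neg h, mul_zero]; exact indP_nonneg m t p σ
  by_cases hj3 : (k : ℤ) + 3 ≤ |p.1 - p.2|
  · have hj1 : (k : ℤ) + 1 ≤ |p.1 - p.2| := by omega
    rw [if_pos hj3, if_pos hj1]
    linarith
  by_cases hjk : |p.1 - p.2| ≤ (k : ℤ)
  · -- LHS is zero
    have hzero : ∀ σ : Cfg m,
        indP m t p σ * (if (k : ℤ) + 2 ≤ dd m (t + 1) σ then (1 : ℝ) else 0) = 0 := by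
      intro σ
      unfold indP
      by_cases hpos : gpos m (extc m σ) t = p
      · rw [if_pos hpos]
        have hstep : dd m (t + 1) σ ≤ |p.1 - p.2| + 1 := by
          unfold dd
          rw [gpos_succ_eq, hpos]
          split <;> simp only [east, north] <;>
            rcases abs_cases (p.1 - p.2) with ⟨hh, _⟩ | ⟨hh, _⟩ <;>
            [rcases abs_cases (p.1 + 1 - p.2) with ⟨hh2, _⟩ | ⟨hh2, _⟩;
             rcases abs_cases (p.1 + 1 - p.2) with ⟨hh2, _⟩ | ⟨hh2, _⟩;
             rcases abs_cases (p.1 - (p.2 + 1)) with ⟨hh2, _⟩ | ⟨hh2, _⟩;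
             rcases abs_cases (p.1 - (p.2 + 1)) with ⟨hh2, _⟩ | ⟨hh2, _⟩] <;>
            omega
        rw [if_neg (by omega), mul_zero]
      · rw [if_neg hpos, zero_mul]
    rw [Finset.sum_congr rfl (fun σ _ => hzero σ), Finset.sum_const_zero]
    rw [if_neg (by omega : ¬((k : ℤ) + 3 ≤ |p.1 - p.2|)),
        if_neg (by omega : ¬((k : ℤ) + 1 ≤ |p.1 - p.2|))]
    norm_num
  · -- middle case : k + 1 ≤ |x - y| ≤ k + 2
    have hj1 : (k : ℤ) + 1 ≤ |p.1 - p.2| := by omega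
    have hj2 : |p.1 - p.2| ≤ (k : ℤ) + 2 := by omega
    rw [if_neg hj3, if_pos hj1]
    have hRHS : 3 / 4 * ((∑ σ : Cfg m, indP m t p σ) * 0)
          + 1 / 4 * ((∑ σ : Cfg m, indP m t p σ) * 1)
        = 1 / 4 * ∑ σ : Cfg m, indP m t p σ := by ring
    rw [hRHS]
    by_cases hforced : p.1 = (m : ℤ) ∨ p.2 = (m : ℤ)
    · -- forced: the displacement strictly decreases
      have hzero : ∀ σ : Cfg m,
          indP m t p σ * (if (k : ℤ) + 2 ≤ dd m (t + 1) σ then (1 : ℝ) else 0) = 0 := by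
        intro σ
        unfold indP
        by_cases hpos : gpos m (extc m σ) t = p
        · rw [if_pos hpos]
          have hdd1 : dd m (t + 1) σ = |p.1 - p.2| - 1 := by
            unfold dd
            rw [gpos_succ_eq, hpos, gdir_forced m (extc m σ) p hforced]
            have h5 := hpl.2.2.2.2
            have h6 := hpl.2.1
            have h7 := hpl.2.2.2.1
            by_cases h1 : p.1 = (m : ℤ)
            · rw [if_pos h1]
              simp only [Bool.false_eq_true, if_false, north]
              rcases abs_cases (p.1 - p.2) with ⟨hh, _⟩ | ⟨hh, _⟩ <;>
                rcases abs_cases (p.1 - (p.2 + 1)) with ⟨hh2, _⟩ | ⟨hh2, _⟩ <;> omega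
            · have h2 : p.2 = (m : ℤ) := hforced.resolve_left h1
              rw [if_neg h1]
              simp only [if_true, east]
              rcases abs_cases (p.1 - p.2) with ⟨hh, _⟩ | ⟨hh, _⟩ <;>
                rcases abs_cases (p.1 + 1 - p.2) with ⟨hh2, _⟩ | ⟨hh2, _⟩ <;> omega
          rw [if_neg (by omega), mul_zero]
        · rw [if_neg hpos, zero_mul]
      rw [Finset.sum_congr rfl (fun σ _ => hzero σ), Finset.sum_const_zero]
      linarith
    · -- free: moving away from the diagonal requires a specific fresh-edge pattern
      push_neg at hforced
      have hxy : p.1 ≠ p.2 := by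
        intro hc
        rw [hc, sub_self, abs_zero] at hj1
        omega
      rcases lt_or_gt_of_ne hxy with hlt | hgt
      · -- x < y, away move = East? no: away = North (dir = false), pattern (true, false)
        have hpt : ∀ σ : Cfg m,
            indP m t p σ * (if (k : ℤ) + 2 ≤ dd m (t + 1) σ then (1 : ℝ) else 0)
              ≤ indP m t p σ * gTF (σ e1) (σ e2) := by
          intro σ
          unfold indP
          by_cases hpos : gpos m (extc m σ) t = p
          · rw [if_pos hpos, one_mul, one_mul]
            have hdir := gdir_free_eq m σ p he1 he2 hforced.1 hforced.2
            rw [← he1d, ← he2d] at hdir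
            have heast : gdir m (extc m σ) p = true →
                (if (k : ℤ) + 2 ≤ dd m (t + 1) σ then (1 : ℝ) else 0) = 0 := by
              intro hd
              have hdd1 : dd m (t + 1) σ = |p.1 - p.2| - 1 := by
                unfold dd
                rw [gpos_succ_eq, hpos, hd, if_pos rfl]
                simp only [east]
                rcases abs_cases (p.1 - p.2) with ⟨hh, _⟩ | ⟨hh, _⟩ <;>
                  rcases abs_cases (p.1 + 1 - p.2) with ⟨hh2, _⟩ | ⟨hh2, _⟩ <;> omega
              rw [if_neg (by omega)]
            rcases Bool.dichotomy (σ e1) with hb1 | hb1 <;>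
              rcases Bool.dichotomy (σ e2) with hb2 | hb2
            · rw [heast (by rw [hdir, hb1, hb2]; simp [le_of_lt hlt])]
              unfold gTF; rw [hb1, hb2]; norm_num
            · rw [heast (by rw [hdir, hb1, hb2]; simp)]
              unfold gTF; rw [hb1, hb2]; norm_num
            · unfold gTF; rw [hb1, hb2]
              split <;> norm_num
            · rw [heast (by rw [hdir, hb1, hb2]; simp [le_of_lt hlt])]
              unfold gTF; rw [hb1, hb2]; norm_num
          · rw [if_neg hpos, zero_mul, zero_mul]
        calc ∑ σ : Cfg m, indP m t p σ * (if (k : ℤ) + 2 ≤ dd m (t + 1) σ then (1 : ℝ) else 0)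
            ≤ ∑ σ : Cfg m, indP m t p σ * gTF (σ e1) (σ e2) :=
              Finset.sum_le_sum fun σ _ => hpt σ
          _ = (∑ σ : Cfg m, indP m t p σ)
              * ((gTF true true + gTF true false + gTF false true + gTF false false) / 4) :=
              fresh2 m e1 e2 (by simp [e1, e2, Subtype.ext_iff]) (indP m t p)
                (fun σ b => indP_update m t p e1 hlev1 σ b)
                (fun σ b => indP_update m t p e2 hlev2 σ b) gTF
          _ = 1 / 4 * ∑ σ : Cfg m, indP m t p σ := by norm_num [gTF]; ring
      · -- x > y, away move = East, pattern (false, true)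
        have hpt : ∀ σ : Cfg m,
            indP m t p σ * (if (k : ℤ) + 2 ≤ dd m (t + 1) σ then (1 : ℝ) else 0)
              ≤ indP m t p σ * gFT (σ e1) (σ e2) := by
          intro σ
          unfold indP
          by_cases hpos : gpos m (extc m σ) t = p
          · rw [if_pos hpos, one_mul, one_mul]
            have hdir := gdir_free_eq m σ p he1 he2 hforced.1 hforced.2
            rw [← he1d, ← he2d] at hdir
            have hnorth : gdir m (extc m σ) p = false →
                (if (k : ℤ) + 2 ≤ dd m (t + 1) σ then (1 : ℝ) else 0) = 0 := by
              intro hd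
              have hdd1 : dd m (t + 1) σ = |p.1 - p.2| - 1 := by
                unfold dd
                rw [gpos_succ_eq, hpos, hd, if_neg (by simp)]
                simp only [north]
                rcases abs_cases (p.1 - p.2) with ⟨hh, _⟩ | ⟨hh, _⟩ <;>
                  rcases abs_cases (p.1 - (p.2 + 1)) with ⟨hh2, _⟩ | ⟨hh2, _⟩ <;> omega
              rw [if_neg (by omega)]
            have hnle : ¬(p.1 ≤ p.2) := not_le_of_gt hgt
            rcases Bool.dichotomy (σ e1) with hb1 | hb1 <;>
              rcases Bool.dichotomy (σ e2) with hb2 | hb2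
            · rw [hnorth (by rw [hdir, hb1, hb2]; simp [hnle])]
              unfold gFT; rw [hb1, hb2]; norm_num
            · unfold gFT; rw [hb1, hb2]
              split <;> norm_num
            · rw [hnorth (by rw [hdir, hb1, hb2]; simp)]
              unfold gFT; rw [hb1, hb2]; norm_num
            · rw [hnorth (by rw [hdir, hb1, hb2]; simp [hnle])]
              unfold gFT; rw [hb1, hb2]; norm_num
          · rw [if_neg hpos, zero_mul, zero_mul]
        calc ∑ σ : Cfg m, indP m t p σ * (if (k : ℤ) + 2 ≤ dd m (t + 1) σ then (1 : ℝ) else 0)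
            ≤ ∑ σ : Cfg m, indP m t p σ * gFT (σ e1) (σ e2) :=
              Finset.sum_le_sum fun σ _ => hpt σ
          _ = (∑ σ : Cfg m, indP m t p σ)
              * ((gFT true true + gFT true false + gFT false true + gFT false false) / 4) :=
              fresh2 m e1 e2 (by simp [e1, e2, Subtype.ext_iff]) (indP m t p)
                (fun σ b => indP_update m t p e1 hlev1 σ b)
                (fun σ b => indP_update m t p e2 hlev2 σ b) gFT
          _ = 1 / 4 * ∑ σ : Cfg m, indP m t p σ := by norm_num [gFT]; ring
/-- Total mass: the number of configurations. -/
noncomputable def TOT (m : ℕ) : ℝ := ∑ _σ : Cfg m, (1 : ℝ)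

lemma TOT_nonneg (m : ℕ) : 0 ≤ TOT m :=
  Finset.sum_nonneg fun _ _ => zero_le_one

lemma Sdd_le_TOT (m t : ℕ) (d : ℤ) : Sdd m t d ≤ TOT m := by
  apply Finset.sum_le_sum
  intro σ _
  split <;> norm_num

lemma Sdd_zero (m : ℕ) (d : ℤ) (hd : 1 ≤ d) : Sdd m 0 d = 0 := by
  unfold Sdd
  rw [Finset.sum_eq_zero]
  intro σ _
  have : dd m 0 σ = 0 := by unfold dd; rfl
  rw [this, if_neg (by omega)]

/-- The exponential tail bound on the displacement, by induction on time. -/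
lemma Qbound (m : ℕ) (hm : 1 ≤ m) :
    ∀ t, t ≤ 2 * m → ∀ d : ℕ, 1 ≤ d → Sdd m t (d : ℤ) ≤ 3 * (1 / 3) ^ d * TOT m := by
  intro t
  induction t with
  | zero =>
    intro _ d hd
    rw [Sdd_zero m (d : ℤ) (by omega)]
    have := TOT_nonneg m
    positivity
  | succ t ih =>
    intro ht d hd
    match d, hd with
    | 1, _ =>
      calc Sdd m (t + 1) ((1 : ℕ) : ℤ) ≤ TOT m := Sdd_le_TOT m (t + 1) _
        _ = 3 * (1 / 3) ^ (1 : ℕ) * TOT m := by norm_num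
    | (k + 2), _ =>
      have hc2 : (((k + 2 : ℕ)) : ℤ) = (k : ℤ) + 2 := by push_cast; ring
      have hc3 : (((k + 3 : ℕ)) : ℤ) = (k : ℤ) + 3 := by push_cast; ring
      have hc1 : (((k + 1 : ℕ)) : ℤ) = (k : ℤ) + 1 := by push_cast; ring
      have h3 := master m hm t (by omega) k
      have i3 := ih (by omega) (k + 3) (by omega)
      have i1 := ih (by omega) (k + 1) (by omega)
      rw [hc3] at i3
      rw [hc1] at i1
      rw [hc2]
      have hpow : (3 : ℝ) / 4 * (3 * (1 / 3) ^ (k + 3) * TOT m)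
          + 1 / 4 * (3 * (1 / 3) ^ (k + 1) * TOT m) = 3 * (1 / 3) ^ (k + 2) * TOT m := by
        rw [pow_succ, pow_succ, pow_succ]
        ring
      linarith

lemma geom_tail (n : ℕ) : ∑ t ∈ Finset.range n, ((1 : ℝ) / 3) ^ (n - t) ≤ 1 / 2 := by
  have h1 : ∑ t ∈ Finset.range n, ((1 : ℝ) / 3) ^ (n - t)
      = ∑ j ∈ Finset.range n, ((1 : ℝ) / 3) ^ (j + 1) := by
    rw [← Finset.sum_range_reflect (fun j => ((1 : ℝ) / 3) ^ (j + 1)) n]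
    apply Finset.sum_congr rfl
    intro t htm
    rw [Finset.mem_range] at htm
    congr 1
    omega
  rw [h1]
  have h2 : ∑ j ∈ Finset.range n, ((1 : ℝ) / 3) ^ (j + 1)
      = (1 / 3) * ∑ j ∈ Finset.range n, ((1 : ℝ) / 3) ^ j := by
    rw [Finset.mul_sum]
    apply Finset.sum_congr rfl
    intro j _
    rw [pow_succ]
    ring
  rw [h2, geom_sum_eq (by norm_num : ((1 : ℝ) / 3) ≠ 1) n]
  have h3 : (0 : ℝ) ≤ (1 / 3 : ℝ) ^ n := by positivity
  have h4 : ((1 / 3 : ℝ) ^ n - 1) / (1 / 3 - 1) = (1 - (1 / 3 : ℝ) ^ n) * (3 / 2) := by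
    ring
  rw [h4]
  nlinarith

/-- Total expected (times `TOT`) cost of the greedy walk. -/
lemma costc_total (m : ℕ) (hm : 1 ≤ m) :
    ∑ σ : Cfg m, costc m σ ≤ ((m : ℝ) + 3 / 4) * TOT m := by
  unfold costc
  rw [Finset.sum_comm]
  have hstep : ∀ t ∈ Finset.range (2 * m),
      ∑ σ : Cfg m, cterm m t σ
        ≤ TOT m * (1 / 2) + (1 / 2) * (3 * (1 / 3) ^ (2 * m - t) * TOT m) := by
    intro t htm
    rw [Finset.mem_range] at htm
    have hb := cterm_bound m hm t htm
    have hq := Qbound m hm t (le_of_lt htm) (2 * m - t) (by omega)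
    have hcast : (((2 * m - t : ℕ)) : ℤ) = 2 * (m : ℤ) - (t : ℤ) := by
      push_cast [Nat.cast_sub (le_of_lt htm)]; ring
    rw [hcast] at hq
    rw [show (∑ σ : Cfg m, (1 : ℝ)) = TOT m from rfl] at hb
    have := Sdd_nonneg m t (2 * (m : ℤ) - (t : ℤ))
    linarith
  calc ∑ t ∈ Finset.range (2 * m), ∑ σ : Cfg m, cterm m t σ
      ≤ ∑ t ∈ Finset.range (2 * m),
          (TOT m * (1 / 2) + (1 / 2) * (3 * (1 / 3) ^ (2 * m - t) * TOT m)) :=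
        Finset.sum_le_sum hstep
    _ = ((2 * m : ℕ) : ℝ) * (TOT m * (1 / 2))
        + (3 / 2) * TOT m * ∑ t ∈ Finset.range (2 * m), ((1 : ℝ) / 3) ^ (2 * m - t) := by
        rw [Finset.sum_add_distrib, Finset.sum_const, Finset.card_range, nsmul_eq_mul,
          Finset.mul_sum]
        congr 1
        apply Finset.sum_congr rfl; intro t _; ring
    _ ≤ ((m : ℝ) + 3 / 4) * TOT m := by
        have hg := geom_tail (2 * m)
        have ht := TOT_nonneg m
        push_cast
        nlinarith
lemma walkWeight_cons (w : V → V → ℝ) (a b : V) (l : List V) :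
    walkWeight w (a :: b :: l) = w a b + walkWeight w (b :: l) := by
  simp [walkWeight]

lemma walkWeight_map_range (w : V → V → ℝ) :
    ∀ (n : ℕ) (f : ℕ → V), walkWeight w ((List.range (n + 1)).map f)
      = ∑ t ∈ Finset.range n, w (f t) (f (t + 1)) := by
  intro n
  induction n with
  | zero => intro f; simp [walkWeight, List.range_succ]
  | succ n ih =>
    intro f
    have h : (List.range (n + 2)).map f = f 0 :: (List.range (n + 1)).map (f ∘ Nat.succ) := by
      rw [List.range_succ_eq_map, List.map_cons, List.map_map]
    have h2 : (List.range (n + 1)).map (f ∘ Nat.succ)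
        = f 1 :: (List.range n).map (f ∘ Nat.succ ∘ Nat.succ) := by
      rw [List.range_succ_eq_map, List.map_cons, List.map_map]
      rfl
    rw [h, h2, walkWeight_cons, ← h2, ih (f ∘ Nat.succ), Finset.sum_range_succ']
    simp only [Function.comp]
    ring_nf
    rw [add_comm]
    rw [add_comm (∑ x ∈ Finset.range n, _) _]
    congr 1
    apply Finset.sum_congr rfl
    intro x _
    rw [show x.succ = 1 + x by omega, show (1 + x).succ = 2 + x by omega]

lemma walkWeight_nonneg (w : V → V → ℝ) (hw : ∀ u v, gridAdj u v → 0 ≤ w u v) :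
    ∀ l : List V, l.Chain' gridAdj → 0 ≤ walkWeight w l := by
  intro l
  induction l with
  | nil => intro _; simp [walkWeight]
  | cons a l ih =>
    cases l with
    | nil => intro _; simp [walkWeight]
    | cons b l' =>
      intro h
      simp only [List.Chain'] at h
      rw [List.isChain_cons_cons] at h
      rw [walkWeight_cons]
      exact add_nonneg (hw a b h.1) (ih h.2)

lemma gridAdj_rep (u v : V) (h : gridAdj u v) :
    (∃ e : V × Bool, edgeOf e = (u, v)) ∨ ∃ e : V × Bool, edgeOf e = (v, u) := by
  unfold gridAdj at h
  have hcase : (v.1 = u.1 + 1 ∧ v.2 = u.2) ∨ (u.1 = v.1 + 1 ∧ u.2 = v.2)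
      ∨ (v.2 = u.2 + 1 ∧ v.1 = u.1) ∨ (u.2 = v.2 + 1 ∧ u.1 = v.1) := by
    rcases abs_cases (u.1 - v.1) with ⟨h1, _⟩ | ⟨h1, _⟩ <;>
      rcases abs_cases (u.2 - v.2) with ⟨h2, _⟩ | ⟨h2, _⟩ <;> omega
  rcases hcase with ⟨h1, h2⟩ | ⟨h1, h2⟩ | ⟨h1, h2⟩ | ⟨h1, h2⟩
  · left
    refine ⟨(u, true), ?_⟩
    have hv : (u.1 + 1, u.2) = v := Prod.ext_iff.2 ⟨h1.symm, h2.symm⟩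
    show (u, (u.1 + 1, u.2)) = (u, v)
    rw [hv]
  · right
    refine ⟨(v, true), ?_⟩
    have hv : (v.1 + 1, v.2) = u := Prod.ext_iff.2 ⟨h1.symm, h2.symm⟩
    show (v, (v.1 + 1, v.2)) = (v, u)
    rw [hv]
  · left
    refine ⟨(u, false), ?_⟩
    have hv : (u.1, u.2 + 1) = v := Prod.ext_iff.2 ⟨h2.symm, h1.symm⟩
    show (u, (u.1, u.2 + 1)) = (u, v)
    rw [hv]
  · right
    refine ⟨(v, false), ?_⟩
    have hv : (v.1, v.2 + 1) = u := Prod.ext_iff.2 ⟨h2.symm, h1.symm⟩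
    show (v, (v.1, v.2 + 1)) = (v, u)
    rw [hv]

/-- The greedy walk as a list. -/
def glist (m : ℕ) (w : V × Bool → Bool) : List V := (List.range (2 * m + 1)).map (gpos m w)

lemma glist_mono (m : ℕ) (hm : 1 ≤ m) (w : V × Bool → Bool) :
    IsMonoWalk ((0 : ℤ), (0 : ℤ)) ((m : ℤ), (m : ℤ)) (glist m w) := by
  refine ⟨?_, ?_, ?_, ?_⟩
  · simp only [List.Chain']
    rw [glist, List.isChain_map, List.isChain_range_succ]
    intro i _
    exact gpos_adj m w i
  · rw [glist, List.range_succ_eq_map, List.map_cons]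
    rfl
  · rw [glist, List.range_succ, List.map_append, List.map_singleton, List.getLast?_concat]
    rw [gpos_final m hm w]
  · rw [glist, List.length_map, List.length_range]
    have h1 : |(0 : ℤ) - (m : ℤ)| = (m : ℤ) := by
      rw [zero_sub, abs_neg, abs_of_nonneg (by positivity)]
    rw [h1]
    omega
lemma TOT_eq (m : ℕ) : TOT m = (2 : ℝ) ^ (Ebox m).card := by
  unfold TOT
  rw [Finset.sum_const, nsmul_eq_mul, mul_one, Finset.card_univ]
  rw [show Fintype.card (Cfg m) = 2 ^ (Ebox m).card by
    rw [Fintype.card_fun, Fintype.card_bool, Fintype.card_coe]]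
  push_cast
  ring

/-- The weight of the greedy walk equals the combinatorial cost, provided the real
weights match the boolean configuration on the box. -/
lemma walk_cost_eq (m : ℕ) (hm : 1 ≤ m) (Wf : V → V → ℝ) (σ : Cfg m)
    (hgood : ∀ e : V × Bool, e ∈ Ebox m →
      Wf (edgeOf e).1 (edgeOf e).2 = (if extc m σ e then 2 else 0)) :
    walkWeight Wf (glist m (extc m σ)) = costc m σ := by
  unfold glist
  rw [walkWeight_map_range Wf (2 * m) (gpos m (extc m σ))]
  unfold costc
  apply Finset.sum_congr rfl
  intro t htm
  rw [Finset.mem_range] at htm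
  have hmem : (gpos m (extc m σ) t, gdir m (extc m σ) (gpos m (extc m σ) t)) ∈ Ebox m := by
    rw [mem_Ebox]
    obtain ⟨c1, c2, c3, c4⟩ := gpos_inbox m hm (extc m σ) t (le_of_lt htm)
    exact ⟨c1, c2, c3, c4⟩
  have hgd := hgood _ hmem
  have hs : gpos m (extc m σ) (t + 1)
      = (edgeOf (gpos m (extc m σ) t, gdir m (extc m σ) (gpos m (extc m σ) t))).2 := by
    rw [gpos_succ_eq]
    unfold edgeOf east north
    cases hbv : gdir m (extc m σ) (gpos m (extc m σ) t) <;> simp [hbv]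
  rw [hs]
  unfold cterm
  rw [← hgd]
  rfl
end S10


open S10

/-- If each edge of the grid graph independently receives weight `0`
or `2` with probability `1/2` each, then there is a constant `C > 0` such that for
every `m ≥ 1`, `E[monodist_w((0,0),(m,m))] ≤ m + C·√m`. -/
theorem stmt10 (Ω : Type) [MeasurableSpace Ω] (μ : Measure Ω) [IsProbabilityMeasure μ]
    (W : Ω → V → V → ℝ)
    (hsymm : ∀ ω u v, W ω u v = W ω v u)
    (hmeas : ∀ e : V × Bool, Measurable fun ω => W ω (edgeOf e).1 (edgeOf e).2)
    (hindep : iIndepFun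
      (fun (e : V × Bool) ω => W ω (edgeOf e).1 (edgeOf e).2) μ)
    (hlaw : ∀ e : V × Bool,
      μ {ω | W ω (edgeOf e).1 (edgeOf e).2 = 0} = 1 / 2 ∧
      μ {ω | W ω (edgeOf e).1 (edgeOf e).2 = 2} = 1 / 2) :
    ∃ C : ℝ, 0 < C ∧
      ∀ m : ℕ, 1 ≤ m →
        (∫ ω, monoDist (W ω) (0, 0) ((m : ℤ), (m : ℤ)) ∂μ) ≤
          (m : ℝ) + C * Real.sqrt (m : ℝ) := by
  classical
  refine ⟨1, one_pos, ?_⟩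
  intro m hm
  set X : V × Bool → Ω → ℝ := fun e ω => W ω (edgeOf e).1 (edgeOf e).2 with hXdef
  -- measurability of the basic events
  have hX2 : ∀ e : V × Bool, MeasurableSet {ω | X e ω = 2} := by
    intro e
    have h := hmeas e (measurableSet_singleton (2 : ℝ))
    convert h using 1
    rfl
  -- the good event has full measure
  have hGae : ∀ᵐ ω ∂μ, ∀ e : V × Bool, X e ω = 0 ∨ X e ω = 2 := by
    rw [ae_all_iff]
    intro e
    rw [ae_iff]
    have hcompl : {ω | ¬(X e ω = 0 ∨ X e ω = 2)}
        = ({ω | X e ω = 0} ∪ {ω | X e ω = 2})ᶜ := by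
      ext ω; simp [not_or]
    have hdisj : Disjoint {ω | X e ω = 0} {ω | X e ω = 2} := by
      rw [Set.disjoint_left]
      intro ω h0 h2
      simp only [Set.mem_setOf_eq] at h0 h2
      rw [h0] at h2
      norm_num at h2
    have hu : μ ({ω | X e ω = 0} ∪ {ω | X e ω = 2}) = 1 := by
      rw [measure_union hdisj (hX2 e), (hlaw e).1, (hlaw e).2, ENNReal.add_halves]
    rw [hcompl, measure_compl ((by
        have h0 : MeasurableSet {ω | X e ω = 0} := by
          have h := hmeas e (measurableSet_singleton (0 : ℝ))
          convert h using 1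
          rfl
        exact h0.union (hX2 e))) (measure_ne_top μ _), hu, measure_univ, tsub_self]
  -- the boolean configuration read off from ω
  set r : Ω → Cfg m := fun ω e => if X e.1 ω = 2 then true else false with hrdef
  -- nonnegativity of weights on the good event
  have hWnn : ∀ ω, (∀ e : V × Bool, X e ω = 0 ∨ X e ω = 2) →
      ∀ u v, gridAdj u v → 0 ≤ W ω u v := by
    intro ω hg u v huv
    rcases gridAdj_rep u v huv with ⟨e, he⟩ | ⟨e, he⟩
    · have hXe : X e ω = W ω u v := by
        show W ω (edgeOf e).1 (edgeOf e).2 = W ω u v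
        rw [he]
      rw [← hXe]
      rcases hg e with h | h <;> rw [h] <;> norm_num
    · have hXe : X e ω = W ω v u := by
        show W ω (edgeOf e).1 (edgeOf e).2 = W ω v u
        rw [he]
      rw [hsymm ω u v, ← hXe]
      rcases hg e with h | h <;> rw [h] <;> norm_num
  -- pointwise comparison on the good event
  have hgoodle : ∀ ω, (∀ e : V × Bool, X e ω = 0 ∨ X e ω = 2) →
      monoDist (W ω) ((0 : ℤ), (0 : ℤ)) ((m : ℤ), (m : ℤ)) ≤ costc m (r ω) := by
    intro ω hg
    have hbdd : BddBelow {c | ∃ p, IsMonoWalk ((0 : ℤ), (0 : ℤ)) ((m : ℤ), (m : ℤ)) p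
        ∧ c = walkWeight (W ω) p} := by
      refine ⟨0, ?_⟩
      rintro c ⟨p, hp, rfl⟩
      exact walkWeight_nonneg (W ω) (hWnn ω hg) p hp.1
    have hmem : walkWeight (W ω) (glist m (extc m (r ω)))
        ∈ {c | ∃ p, IsMonoWalk ((0 : ℤ), (0 : ℤ)) ((m : ℤ), (m : ℤ)) p
            ∧ c = walkWeight (W ω) p} :=
      ⟨glist m (extc m (r ω)), glist_mono m hm _, rfl⟩
    have h1 : monoDist (W ω) ((0 : ℤ), (0 : ℤ)) ((m : ℤ), (m : ℤ))
        ≤ walkWeight (W ω) (glist m (extc m (r ω))) := csInf_le hbdd hmem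
    have h2 : walkWeight (W ω) (glist m (extc m (r ω))) = costc m (r ω) := by
      apply walk_cost_eq m hm (W ω) (r ω)
      intro e heb
      have hx : extc m (r ω) e = (if X e ω = 2 then true else false) := by
        rw [extc_pair m (r ω) e heb]
      rw [hx]
      show X e ω = _
      rcases hg e with h | h <;> rw [h] <;> norm_num
    rw [← h2]
    exact h1
  -- measurability of the configuration fibers
  have hrfib : ∀ σ : Cfg m, MeasurableSet {ω | r ω = σ} := by
    intro σ
    have hset : {ω | r ω = σ} = ⋂ e : {e // e ∈ Ebox m}, {ω | r ω e = σ e} := by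
      ext ω; simp [funext_iff]
    rw [hset]
    refine MeasurableSet.iInter fun e => ?_
    rcases Bool.dichotomy (σ e) with hb | hb <;> rw [hb]
    · have : {ω | r ω e = false} = {ω | X e.1 ω = 2}ᶜ := by
        ext ω
        simp only [hrdef, Set.mem_compl_iff, Set.mem_setOf_eq]
        by_cases h2 : X e.1 ω = 2 <;> simp [h2]
      rw [this]
      exact (hX2 e.1).compl
    · have : {ω | r ω e = true} = {ω | X e.1 ω = 2} := by
        ext ω
        simp only [hrdef, Set.mem_setOf_eq]
        by_cases h2 : X e.1 ω = 2 <;> simp [h2]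
      rw [this]
      exact hX2 e.1
  -- probability of each configuration fiber
  have hrprob : ∀ σ : Cfg m, μ {ω | r ω = σ} = (1 / 2 : ENNReal) ^ (Ebox m).card := by
    intro σ
    set Sets : V × Bool → Set ℝ :=
      fun e => if extc m σ e = true then ({2} : Set ℝ) else (({2} : Set ℝ)ᶜ) with hSets
    have hSets2 : ∀ e, extc m σ e = true → Sets e = {2} := by
      intro e h; simp only [hSets]; rw [if_pos h]
    have hSets2' : ∀ e, ¬(extc m σ e = true) → Sets e = ({2} : Set ℝ)ᶜ := by
      intro e h; simp only [hSets]; rw [if_neg h]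
    have hsets : ∀ e : V × Bool, MeasurableSet (Sets e) := by
      intro e
      by_cases h : extc m σ e = true
      · rw [hSets2 e h]; exact measurableSet_singleton 2
      · rw [hSets2' e h]; exact (measurableSet_singleton 2).compl
    have hkey := hindep.measure_inter_preimage_eq_mul (S := Ebox m) (sets := Sets)
      (fun e _ => hsets e)
    have hseteq : {ω | r ω = σ} = ⋂ e ∈ Ebox m, X e ⁻¹' Sets e := by
      ext ω
      simp only [Set.mem_setOf_eq, Set.mem_iInter, Set.mem_preimage, funext_iff]
      constructor
      · intro h e he
        have h1 := h ⟨e, he⟩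
        simp only [hrdef] at h1
        by_cases h2 : X e ω = 2
        · rw [hSets2 e (by rw [extc_pair m σ e he, ← h1, if_pos h2])]
          simp [h2]
        · rw [hSets2' e (by rw [extc_pair m σ e he, ← h1, if_neg h2]; simp)]
          simp [h2]
      · intro h e
        have h1 := h e.1 e.2
        simp only [hrdef]
        by_cases h2 : extc m σ e.1 = true
        · rw [hSets2 e.1 h2] at h1
          have h3 : X e.1 ω = 2 := h1
          rw [if_pos h3]
          rw [extc_pair m σ e.1 e.2] at h2
          exact h2.symm
        · rw [hSets2' e.1 h2] at h1
          have h3 : ¬ X e.1 ω = 2 := h1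
          rw [if_neg h3]
          rw [extc_pair m σ e.1 e.2] at h2
          simp only [Bool.not_eq_true] at h2
          exact h2.symm
    rw [hseteq, hkey]
    have hfac : ∀ e ∈ Ebox m, μ (X e ⁻¹' Sets e) = 1 / 2 := by
      intro e _
      have hpre : X e ⁻¹' ({2} : Set ℝ) = {ω | X e ω = 2} := rfl
      by_cases hb : extc m σ e = true
      · rw [hSets2 e hb, hpre]
        exact (hlaw e).2
      · rw [hSets2' e hb, Set.preimage_compl, hpre]
        rw [measure_compl (hX2 e) (measure_ne_top μ _), measure_univ, (hlaw e).2]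
        exact ENNReal.sub_eq_of_eq_add (by norm_num) (ENNReal.add_halves 1).symm
    rw [Finset.prod_congr rfl hfac, Finset.prod_const]
  -- decomposition of the dominating cost function
  have hdecomp : (fun ω => costc m (r ω))
      = fun ω => ∑ σ : Cfg m, Set.indicator {ω' | r ω' = σ} (fun _ => costc m σ) ω := by
    funext ω
    have hind : ∀ σ : Cfg m,
        Set.indicator {ω' | r ω' = σ} (fun _ => costc m σ) ω
          = if r ω = σ then costc m σ else 0 := by
      intro σ
      by_cases h : r ω = σ
      · rw [if_pos h, Set.indicator_of_mem (show ω ∈ {ω' | r ω' = σ} from h)]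
      · rw [if_neg h, Set.indicator_of_notMem (show ω ∉ {ω' | r ω' = σ} from h)]
    rw [Finset.sum_congr rfl (fun σ _ => hind σ)]
    rw [Finset.sum_ite_eq Finset.univ (r ω) (fun σ => costc m σ)]
    rw [if_pos (Finset.mem_univ _)]
  have hint : Integrable (fun ω => costc m (r ω)) μ := by
    rw [hdecomp]
    apply integrable_finset_sum
    intro σ _
    exact (integrable_const _).indicator (hrfib σ)
  have hIval : ∫ ω, costc m (r ω) ∂μ ≤ (m : ℝ) + 3 / 4 := by
    rw [show (∫ ω, costc m (r ω) ∂μ)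
        = ∫ ω, ∑ σ : Cfg m, Set.indicator {ω' | r ω' = σ} (fun _ => costc m σ) ω ∂μ by
      rw [← hdecomp]]
    rw [integral_finset_sum _ (fun σ _ => (integrable_const _).indicator (hrfib σ))]
    have hterm : ∀ σ : Cfg m,
        ∫ ω, Set.indicator {ω' | r ω' = σ} (fun _ => costc m σ) ω ∂μ
          = ((1 / 2 : ENNReal) ^ (Ebox m).card).toReal * costc m σ := by
      intro σ
      rw [integral_indicator_const _ (hrfib σ), measureReal_def, hrprob σ, smul_eq_mul]
    rw [Finset.sum_congr rfl (fun σ _ => hterm σ), ← Finset.mul_sum]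
    have hc : ((1 / 2 : ENNReal) ^ (Ebox m).card).toReal = (1 / 2 : ℝ) ^ (Ebox m).card := by
      rw [ENNReal.toReal_pow]
      norm_num
    rw [hc]
    have htot := costc_total m hm
    have hpos : (0 : ℝ) ≤ (1 / 2 : ℝ) ^ (Ebox m).card := by positivity
    calc (1 / 2 : ℝ) ^ (Ebox m).card * ∑ σ : Cfg m, costc m σ
        ≤ (1 / 2 : ℝ) ^ (Ebox m).card * (((m : ℝ) + 3 / 4) * TOT m) :=
          mul_le_mul_of_nonneg_left htot hpos
      _ = ((m : ℝ) + 3 / 4) * ((1 / 2 : ℝ) ^ (Ebox m).card * TOT m) := by ring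
      _ = (m : ℝ) + 3 / 4 := by
          rw [TOT_eq, ← mul_pow]
          norm_num
  -- conclusion
  have hnn : ∀ᵐ ω ∂μ, 0 ≤ monoDist (W ω) ((0 : ℤ), (0 : ℤ)) ((m : ℤ), (m : ℤ)) := by
    filter_upwards [hGae] with ω hg
    apply Real.sInf_nonneg
    rintro c ⟨p, hp, rfl⟩
    exact walkWeight_nonneg (W ω) (hWnn ω hg) p hp.1
  have hmono_le : ∀ᵐ ω ∂μ, monoDist (W ω) ((0 : ℤ), (0 : ℤ)) ((m : ℤ), (m : ℤ))
      ≤ costc m (r ω) := by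
    filter_upwards [hGae] with ω hg
    exact hgoodle ω hg
  calc ∫ ω, monoDist (W ω) ((0 : ℤ), (0 : ℤ)) ((m : ℤ), (m : ℤ)) ∂μ
      ≤ ∫ ω, costc m (r ω) ∂μ := integral_mono_of_nonneg hnn hint hmono_le
    _ ≤ (m : ℝ) + 3 / 4 := hIval
    _ ≤ (m : ℝ) + 1 * Real.sqrt (m : ℝ) := by
        have h1 : (1 : ℝ) ≤ Real.sqrt (m : ℝ) := by
          rw [Real.one_le_sqrt]
          exact_mod_cast hm
        linarith
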